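/- arXiv:1903.03317 — 2 statements merged into one kernel-verified Lean document; each statement's English description precedes it below -/
import Mathlib

section
/- Let Λ ⊂ ℝᵈ be a bounded measurable region with Lebesgue volume |Λ|, and let M ≥ 1 and C > 0. Suppose for each m ∈ ℕ that j_m : Λ^m → [0,∞) is measurable with j_m ≤ M^m C pointwise (where j₀ is a constant in [0, C]), and that the normalization Σ_{m=0}^∞ (1/m!) ∫_{Λ^m} j_m(x₁,…,x_m) dx₁⋯dx_m = 1 holds. Then the entropy series Σ_{m=0}^∞ (1/m!) ∫_{Λ^m} j_m(x₁,…,x_m) log(j_m(x₁,…,x_m)) dx₁⋯dx_m converges absolutely to a finite real number, with the convention 0·log 0 = 0. -/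
open MeasureTheory ENNReal

lemma abs_mul_log_le_aux {t B : ℝ} (ht : 0 ≤ t) (htB : t ≤ B) :
    |t * Real.log t| ≤ 1 + B ^ 2 := by
  have hB : 0 ≤ B := le_trans ht htB
  rcases eq_or_lt_of_le ht with h0 | h0
  · rw [← h0]
    simp
    positivity
  · rw [abs_le]
    constructor
    · have h1 : 1 - t⁻¹ ≤ Real.log t := Real.one_sub_inv_le_log_of_pos h0
      have h2 := mul_le_mul_of_nonneg_left h1 ht
      have h3 : t * t⁻¹ = 1 := mul_inv_cancel₀ (ne_of_gt h0)
      nlinarith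
    · have h2 : Real.log t ≤ t - 1 := Real.log_le_sub_one_of_pos h0
      nlinarith

/-- Finiteness of the finite-volume entropy functional: if the Janossy-type densities
`j_m : Λ^m → [0,∞)` satisfy the Ruelle-type bound `j_m ≤ M^m C` and the normalization
`∑_m (1/m!) ∫_{Λ^m} j_m = 1`, then the entropy series
`∑_m (1/m!) ∫_{Λ^m} j_m log j_m` converges absolutely to a finite real number
(with the convention `0·log 0 = 0`, which holds automatically since `Real.log 0 = 0`). -/
theorem entropy_series_finite {d : ℕ} (hd : 1 ≤ d)
    (Λ : Set (EuclideanSpace ℝ (Fin d))) (hΛb : Bornology.IsBounded Λ)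
    (hΛm : MeasurableSet Λ)
    (M C : ℝ) (hM : 1 ≤ M) (hC : 0 < C)
    (j : (m : ℕ) → (Fin m → EuclideanSpace ℝ (Fin d)) → ℝ)
    (hjmeas : ∀ m, Measurable (j m))
    (hjnonneg : ∀ (m : ℕ) (x : Fin m → EuclideanSpace ℝ (Fin d)), 0 ≤ j m x)
    (hjbound : ∀ (m : ℕ) (x : Fin m → EuclideanSpace ℝ (Fin d)), j m x ≤ M ^ m * C)
    (hnorm : ∑' m : ℕ, ((m.factorial : ℝ≥0∞))⁻¹ *
        ∫⁻ x in Set.univ.pi (fun _ : Fin m => Λ), ENNReal.ofReal (j m x) = 1) :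
    (∑' m : ℕ, ((m.factorial : ℝ≥0∞))⁻¹ *
        ∫⁻ x in Set.univ.pi (fun _ : Fin m => Λ),
          ENNReal.ofReal |j m x * Real.log (j m x)|) < ⊤ ∧
    Summable (fun m : ℕ => (1 / (m.factorial : ℝ)) *
        ∫ x in Set.univ.pi (fun _ : Fin m => Λ), j m x * Real.log (j m x)) := by
  set Vr : ℝ := (volume Λ).toReal with hVr_def
  have hVr : 0 ≤ Vr := ENNReal.toReal_nonneg
  have hVfin : volume Λ < ⊤ := hΛb.measure_lt_top
  -- the comparison series
  set f : ℕ → ℝ := fun m => (1 / (m.factorial : ℝ)) * ((1 + (M ^ m * C) ^ 2) * Vr ^ m)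
    with hf_def
  have hf_nonneg : ∀ m, 0 ≤ f m := by
    intro m
    have := Nat.factorial_pos m
    positivity
  have hf_eq : ∀ m, f m = Vr ^ m / m.factorial +
      C ^ 2 * ((M ^ 2 * Vr) ^ m / m.factorial) := by
    intro m
    have hm : (m.factorial : ℝ) ≠ 0 := Nat.cast_ne_zero.2 (Nat.factorial_pos m).ne'
    simp only [hf_def]
    field_simp
    ring
  have hf_sum : Summable f := by
    rw [show f = fun m => Vr ^ m / m.factorial +
        C ^ 2 * ((M ^ 2 * Vr) ^ m / m.factorial) from funext hf_eq]
    exact (Real.summable_pow_div_factorial Vr).add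
      (((Real.summable_pow_div_factorial (M ^ 2 * Vr))).mul_left (C ^ 2))
  -- volume of the box
  have hvol : ∀ m : ℕ, volume (Set.univ.pi (fun _ : Fin m => Λ)) = ENNReal.ofReal (Vr ^ m) := by
    intro m
    rw [volume_pi_pi]
    simp only [Finset.prod_const, Finset.card_univ, Fintype.card_fin]
    rw [ENNReal.ofReal_pow hVr, ENNReal.ofReal_toReal hVfin.ne]
  have hBpos : ∀ m : ℕ, (0:ℝ) < M ^ m * C := by
    intro m
    have : (0:ℝ) < M := lt_of_lt_of_le one_pos hM
    positivity
  -- pointwise bound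
  have hpt : ∀ (m : ℕ) x, |j m x * Real.log (j m x)| ≤ 1 + (M ^ m * C) ^ 2 :=
    fun m x => abs_mul_log_le_aux (hjnonneg m x) (hjbound m x)
  constructor
  · -- the lintegral part
    have hterm : ∀ m : ℕ, ((m.factorial : ℝ≥0∞))⁻¹ *
        ∫⁻ x in Set.univ.pi (fun _ : Fin m => Λ),
          ENNReal.ofReal |j m x * Real.log (j m x)| ≤ ENNReal.ofReal (f m) := by
      intro m
      have h1 : ∫⁻ x in Set.univ.pi (fun _ : Fin m => Λ),
          ENNReal.ofReal |j m x * Real.log (j m x)| ≤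
          ∫⁻ _ in Set.univ.pi (fun _ : Fin m => Λ),
            ENNReal.ofReal (1 + (M ^ m * C) ^ 2) :=
        lintegral_mono fun x => ENNReal.ofReal_le_ofReal (hpt m x)
      rw [setLIntegral_const, hvol m] at h1
      calc ((m.factorial : ℝ≥0∞))⁻¹ *
            ∫⁻ x in Set.univ.pi (fun _ : Fin m => Λ),
              ENNReal.ofReal |j m x * Real.log (j m x)|
          ≤ ((m.factorial : ℝ≥0∞))⁻¹ *
            (ENNReal.ofReal (1 + (M ^ m * C) ^ 2) * ENNReal.ofReal (Vr ^ m)) :=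
            mul_le_mul_right h1 _
        _ = ENNReal.ofReal (f m) := by
            have hm : (0:ℝ) < m.factorial := Nat.cast_pos.2 (Nat.factorial_pos m)
            have h2 : ((m.factorial : ℝ≥0∞))⁻¹ = ENNReal.ofReal (1 / (m.factorial : ℝ)) := by
              rw [one_div, ENNReal.ofReal_inv_of_pos hm, ENNReal.ofReal_natCast]
            rw [h2, ← ENNReal.ofReal_mul (by positivity), ← ENNReal.ofReal_mul (by positivity),
              hf_def]
    calc (∑' m : ℕ, ((m.factorial : ℝ≥0∞))⁻¹ *
            ∫⁻ x in Set.univ.pi (fun _ : Fin m => Λ),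
              ENNReal.ofReal |j m x * Real.log (j m x)|)
        ≤ ∑' m : ℕ, ENNReal.ofReal (f m) := ENNReal.tsum_le_tsum hterm
      _ = ENNReal.ofReal (∑' m, f m) := (ENNReal.ofReal_tsum_of_nonneg hf_nonneg hf_sum).symm
      _ < ⊤ := ENNReal.ofReal_lt_top
  · -- summability of the real series
    apply Summable.of_norm_bounded hf_sum
    intro m
    have hmeas : AEStronglyMeasurable (fun x => j m x * Real.log (j m x))
        ((volume : Measure (Fin m → EuclideanSpace ℝ (Fin d))).restrict
          (Set.univ.pi (fun _ : Fin m => Λ))) :=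
      ((hjmeas m).mul (Real.measurable_log.comp (hjmeas m))).aestronglyMeasurable
    have hslt : volume (Set.univ.pi (fun _ : Fin m => Λ)) < ⊤ := by
      rw [hvol m]; exact ENNReal.ofReal_lt_top
    have hbound := norm_setIntegral_le_of_norm_le_const hslt
      (f := fun x => j m x * Real.log (j m x))
      (fun x _ => by rw [Real.norm_eq_abs]; exact hpt m x)
    rw [measureReal_def, hvol m, ENNReal.toReal_ofReal (by positivity)] at hbound
    rw [norm_mul]
    have hm : (0:ℝ) < m.factorial := Nat.cast_pos.2 (Nat.factorial_pos m)
    calc ‖1 / (m.factorial : ℝ)‖ *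
          ‖∫ x in Set.univ.pi (fun _ : Fin m => Λ), j m x * Real.log (j m x)‖
        ≤ (1 / (m.factorial : ℝ)) * ((1 + (M ^ m * C) ^ 2) * Vr ^ m) := by
          apply mul_le_mul _ hbound (norm_nonneg _) (by positivity)
          rw [Real.norm_eq_abs, abs_of_pos (by positivity)]
      _ = f m := rfl
end

section
/- Let u : ℝᵈ → ℝ be measurable and let ρ : ℝᵈ × ℝᵈ → [0,∞) be measurable, bounded, and translation invariant (ρ(x+z,y+z) = ρ(x,y) for all x,y,z). Suppose y ↦ u(y)ρ(y,0) is absolutely integrable over ℝᵈ. Then for every ε > 0 there exists r > 0 such that limsup_{ℓ→∞} | (1/|Λ_ℓ|) ∫_{Δ₂ ∪ Δ₃} u(x−y) ρ(x,y) d(x,y) | ≤ ε, where for r < ℓ the sets are Δ₂ = {(x,y) ∈ Λ_ℓ × Λ_ℓ : x ∈ Λ_ℓ ∖ Λ_{ℓ−r}, |y−x| ≤ r} and Δ₃ = {(x,y) ∈ Λ_ℓ × Λ_ℓ : |x−y| > r}. -/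
open MeasureTheory ENNReal Filter

/-- The box `Λ_ℓ = [-ℓ,ℓ]^d ⊂ ℝᵈ`. -/
def lam (d : ℕ) (ℓ : ℝ) : Set (EuclideanSpace ℝ (Fin d)) := {x | ∀ i, |x i| ≤ ℓ}

/-- The boundary region `Δ₂ = {(x,y) ∈ Λ_ℓ² : x ∈ Λ_ℓ ∖ Λ_{ℓ-r}, |y-x| ≤ r}`. -/
def delta2 (d : ℕ) (ℓ r : ℝ) :
    Set (EuclideanSpace ℝ (Fin d) × EuclideanSpace ℝ (Fin d)) :=
  {p | p.1 ∈ lam d ℓ ∧ p.2 ∈ lam d ℓ ∧ p.1 ∉ lam d (ℓ - r) ∧ ‖p.2 - p.1‖ ≤ r}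

/-- The off-diagonal region `Δ₃ = {(x,y) ∈ Λ_ℓ² : |x-y| > r}`. -/
def delta3 (d : ℕ) (ℓ r : ℝ) :
    Set (EuclideanSpace ℝ (Fin d) × EuclideanSpace ℝ (Fin d)) :=
  {p | p.1 ∈ lam d ℓ ∧ p.2 ∈ lam d ℓ ∧ r < ‖p.1 - p.2‖}

lemma lam_measurableSet {d : ℕ} (ℓ : ℝ) : MeasurableSet (lam d ℓ) := by
  have h : lam d ℓ = ⋂ i, {x : EuclideanSpace ℝ (Fin d) | |x i| ≤ ℓ} := by
    ext x; simp [lam]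
  rw [h]
  exact MeasurableSet.iInter fun i =>
    measurableSet_le ((by fun_prop :
      Measurable fun x : EuclideanSpace ℝ (Fin d) => x i).abs) measurable_const

lemma lam_mono {d : ℕ} {ℓ' ℓ : ℝ} (h : ℓ' ≤ ℓ) : lam d ℓ' ⊆ lam d ℓ :=
  fun x hx i => (hx i).trans h

lemma volume_lam {d : ℕ} {ℓ : ℝ} (hℓ : 0 ≤ ℓ) :
    volume (lam d ℓ) = ENNReal.ofReal ((2 * ℓ) ^ d) := by
  have e := EuclideanSpace.volume_preserving_symm_measurableEquiv_toLp (Fin d)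
  have h : lam d ℓ = (MeasurableEquiv.toLp 2 (Fin d → ℝ)).symm ⁻¹'
      (Set.pi Set.univ fun _ => Set.Icc (-ℓ) ℓ) := by
    ext x
    simp [lam, Set.mem_pi, abs_le, Pi.le_def, forall_and]
  rw [h, e.measure_preimage ((MeasurableSet.univ_pi fun _ => measurableSet_Icc).nullMeasurableSet)]
  rw [volume_pi_pi]
  simp only [Real.volume_Icc]
  rw [Finset.prod_const, ← ENNReal.ofReal_pow (by linarith)]
  congr 2
  · ring
  · simp

lemma key_prod {d : ℕ} (G : EuclideanSpace ℝ (Fin d) → ℝ≥0∞) (hG : Measurable G)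
    (A S : Set (EuclideanSpace ℝ (Fin d))) (hA : MeasurableSet A) (hS : MeasurableSet S) :
    ∫⁻ p in {p : EuclideanSpace ℝ (Fin d) × EuclideanSpace ℝ (Fin d) | p.1 ∈ A ∧ p.1 - p.2 ∈ S},
      G (p.1 - p.2) = volume A * ∫⁻ z in S, G z := by
  have hsub : Measurable fun p : EuclideanSpace ℝ (Fin d) × EuclideanSpace ℝ (Fin d) =>
      p.1 - p.2 := measurable_fst.sub measurable_snd
  have hT : MeasurableSet {p : EuclideanSpace ℝ (Fin d) × EuclideanSpace ℝ (Fin d) |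
      p.1 ∈ A ∧ p.1 - p.2 ∈ S} := (measurable_fst hA).inter (hsub hS)
  rw [← lintegral_indicator hT]
  have hind : ∀ p : EuclideanSpace ℝ (Fin d) × EuclideanSpace ℝ (Fin d),
      ({p : EuclideanSpace ℝ (Fin d) × EuclideanSpace ℝ (Fin d) | p.1 ∈ A ∧ p.1 - p.2 ∈ S}.indicator
        (fun p => G (p.1 - p.2)) p)
      = A.indicator 1 p.1 * S.indicator G (p.1 - p.2) := by
    intro p
    by_cases h1 : p.1 ∈ A <;> by_cases h2 : p.1 - p.2 ∈ S <;>
      simp [Set.indicator, h1, h2]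
  simp only [hind]
  have m1 : Measurable fun p : EuclideanSpace ℝ (Fin d) × EuclideanSpace ℝ (Fin d) =>
      A.indicator (1 : EuclideanSpace ℝ (Fin d) → ℝ≥0∞) p.1 :=
    (measurable_one.indicator hA).comp measurable_fst
  have m2 : Measurable fun p : EuclideanSpace ℝ (Fin d) × EuclideanSpace ℝ (Fin d) =>
      S.indicator G (p.1 - p.2) := (hG.indicator hS).comp hsub
  rw [Measure.volume_eq_prod, lintegral_prod (fun p => A.indicator 1 p.1 * S.indicator G (p.1 - p.2)) (m1.mul m2).aemeasurable]
  have hinner : ∀ x : EuclideanSpace ℝ (Fin d),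
      ∫⁻ y, A.indicator 1 x * S.indicator G (x - y) = A.indicator 1 x * ∫⁻ z in S, G z := by
    intro x
    rw [lintegral_const_mul' _ _ (by by_cases h : x ∈ A <;> simp [Set.indicator, h])]
    congr 1
    rw [(Measure.measurePreserving_sub_left volume x).lintegral_comp (hG.indicator hS),
      lintegral_indicator hS]
  simp only [hinner]
  rw [lintegral_mul_const _ (measurable_one.indicator hA), lintegral_indicator_one hA, mul_comm]

/-- For every `ε > 0` there is `r > 0` such that
`limsup_{ℓ→∞} |(1/|Λ_ℓ|) ∫_{Δ₂ ∪ Δ₃} u(x-y) ρ(x,y) d(x,y)| ≤ ε`, with `|Λ_ℓ| = (2ℓ)^d`. -/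
theorem delta23_limsup {d : ℕ} (hd : 1 ≤ d)
    (u : EuclideanSpace ℝ (Fin d) → ℝ) (humeas : Measurable u)
    (ρ : EuclideanSpace ℝ (Fin d) × EuclideanSpace ℝ (Fin d) → ℝ)
    (hρmeas : Measurable ρ) (hρnonneg : ∀ p, 0 ≤ ρ p)
    (ξ : ℝ) (hρbound : ∀ p, ρ p ≤ ξ)
    (hti : ∀ x y z : EuclideanSpace ℝ (Fin d), ρ (x + z, y + z) = ρ (x, y))
    (hint : Integrable (fun y : EuclideanSpace ℝ (Fin d) => u y * ρ (y, 0)))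
    (ε : ℝ) (hε : 0 < ε) :
    ∃ r : ℝ, 0 < r ∧
      limsup (fun ℓ : ℝ =>
        |((2 * ℓ) ^ d)⁻¹ * ∫ p in delta2 d ℓ r ∪ delta3 d ℓ r, u (p.1 - p.2) * ρ p|)
        atTop ≤ ε := by
  classical
  -- translation invariance in the convenient form
  have hρ' : ∀ x y : EuclideanSpace ℝ (Fin d), ρ (x, y) = ρ (x - y, 0) := by
    intro x y
    have := hti (x - y) 0 y
    simpa using this
  -- the density G
  set G : EuclideanSpace ℝ (Fin d) → ℝ≥0∞ :=
    fun z => ENNReal.ofReal (|u z| * ρ (z, 0)) with hGdef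
  have hGmeas : Measurable G :=
    (humeas.abs.mul (hρmeas.comp (measurable_id.prodMk measurable_const))).ennreal_ofReal
  have hCtot : (∫⁻ z, G z) < ⊤ := by
    have h2 := hint.2
    rw [hasFiniteIntegral_iff_norm] at h2
    refine lt_of_eq_of_lt (lintegral_congr fun z => ?_) h2
    rw [hGdef]
    rw [Real.norm_eq_abs, abs_mul, abs_of_nonneg (hρnonneg _)]
  -- choose r with small tail
  set ν : Measure (EuclideanSpace ℝ (Fin d)) := volume.withDensity G with hνdef
  have hsmeas : ∀ n : ℕ, MeasurableSet {z : EuclideanSpace ℝ (Fin d) | (n : ℝ) < ‖z‖} :=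
    fun n => measurableSet_lt measurable_const measurable_norm
  have hν : ∀ S : Set (EuclideanSpace ℝ (Fin d)), MeasurableSet S → ν S = ∫⁻ z in S, G z :=
    fun S hS => withDensity_apply G hS
  have htail : ∃ n : ℕ, ν {z : EuclideanSpace ℝ (Fin d) | (n : ℝ) < ‖z‖} < ENNReal.ofReal (ε/2) := by
    have hanti : Antitone fun n : ℕ => {z : EuclideanSpace ℝ (Fin d) | (n : ℝ) < ‖z‖} := by
      intro n m hnm z hz
      have hz' : (m : ℝ) < ‖z‖ := hz
      show (n : ℝ) < ‖z‖
      have : (n : ℝ) ≤ (m : ℝ) := by exact_mod_cast hnm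
      linarith
    have hfin : ν {z : EuclideanSpace ℝ (Fin d) | ((0 : ℕ) : ℝ) < ‖z‖} ≠ ⊤ := by
      rw [hν _ (hsmeas 0)]
      exact ((setLIntegral_le_lintegral _ _).trans_lt hCtot).ne
    have hiInter : (⋂ n : ℕ, {z : EuclideanSpace ℝ (Fin d) | (n : ℝ) < ‖z‖}) = ∅ := by
      ext z
      simp only [Set.mem_iInter, Set.mem_setOf_eq, Set.mem_empty_iff_false, iff_false, not_forall,
        not_lt]
      obtain ⟨n, hn⟩ := exists_nat_ge ‖z‖
      exact ⟨n, hn⟩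
    have ht := tendsto_measure_iInter_atTop (μ := ν)
      (fun n => (hsmeas n).nullMeasurableSet) hanti ⟨0, hfin⟩
    rw [hiInter, measure_empty] at ht
    have := ht.eventually (gt_mem_nhds (ENNReal.ofReal_pos.2 (half_pos hε)))
    exact this.exists
  obtain ⟨n, hn⟩ := htail
  refine ⟨(n : ℝ) + 1, by positivity, ?_⟩
  set r : ℝ := (n : ℝ) + 1 with hrdef
  have hr : 0 < r := by positivity
  have hTail : ∫⁻ z in {z : EuclideanSpace ℝ (Fin d) | r < ‖z‖}, G z ≤ ENNReal.ofReal (ε/2) := by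
    refine le_trans (lintegral_mono_set fun z hz => ?_) ((hν _ (hsmeas n)) ▸ hn.le)
    have hz' : r < ‖z‖ := hz
    show (n : ℝ) < ‖z‖
    rw [hrdef] at hz'
    linarith
  -- the vanishing boundary term
  set Ct : ℝ := (∫⁻ z, G z).toReal with hCt
  have hφtend : Tendsto (fun ℓ : ℝ => (1 - (1 - r/ℓ)^d) * Ct) atTop (nhds 0) := by
    have h1 : Tendsto (fun ℓ : ℝ => r / ℓ) atTop (nhds 0) := by
      simpa [div_eq_mul_inv] using tendsto_inv_atTop_zero.const_mul r
    have h2 : Tendsto (fun ℓ : ℝ => (1 - r/ℓ)^d) atTop (nhds 1) := by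
      have := (tendsto_const_nhds (x := (1:ℝ)) (f := atTop)).sub h1
      simpa using this.pow d
    have h3 : Tendsto (fun ℓ : ℝ => 1 - (1 - r/ℓ)^d) atTop (nhds 0) := by
      have := (tendsto_const_nhds (x := (1:ℝ)) (f := atTop)).sub h2
      simpa using this
    simpa using h3.mul_const Ct
  have hφev : ∀ᶠ ℓ : ℝ in atTop, (1 - (1 - r/ℓ)^d) * Ct < ε/2 :=
    hφtend.eventually_lt_const (half_pos hε)
  -- main eventual bound
  have hev : ∀ᶠ ℓ : ℝ in atTop,
      |((2 * ℓ) ^ d)⁻¹ * ∫ p in delta2 d ℓ r ∪ delta3 d ℓ r, u (p.1 - p.2) * ρ p| ≤ ε := by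
    filter_upwards [eventually_ge_atTop (max r 1), hφev] with ℓ hℓ hφ
    have hℓr : r ≤ ℓ := le_trans (le_max_left _ _) hℓ
    have hℓ1 : 1 ≤ ℓ := le_trans (le_max_right _ _) hℓ
    have hℓ0 : 0 < ℓ := by linarith
    have hP : 0 < (2 * ℓ) ^ d := by positivity
    -- step A+B : bound the integral by a lintegral of G ∘ sub
    have hA1 : |∫ p in delta2 d ℓ r ∪ delta3 d ℓ r, u (p.1 - p.2) * ρ p| ≤
        (∫⁻ p in delta2 d ℓ r ∪ delta3 d ℓ r, G (p.1 - p.2)).toReal := by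
      rw [← Real.norm_eq_abs]
      refine le_trans (norm_integral_le_lintegral_norm _) (le_of_eq ?_)
      congr 1
      refine lintegral_congr fun p => ?_
      rw [hGdef, Real.norm_eq_abs, abs_mul, abs_of_nonneg (hρnonneg _), hρ' p.1 p.2]
    -- step C+D : bound the lintegral
    have hsplit : (∫⁻ p in delta2 d ℓ r ∪ delta3 d ℓ r, G (p.1 - p.2)) ≤
        ENNReal.ofReal ((2*ℓ)^d - (2*(ℓ-r))^d) * (∫⁻ z, G z)
          + ENNReal.ofReal ((2*ℓ)^d) * ENNReal.ofReal (ε/2) := by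
      refine le_trans (lintegral_union_le _ _ _) (add_le_add ?_ ?_)
      · -- Δ₂ part
        have hstep : ∫⁻ p in delta2 d ℓ r, G (p.1 - p.2) ≤
            ∫⁻ p in {p : EuclideanSpace ℝ (Fin d) × EuclideanSpace ℝ (Fin d) |
              p.1 ∈ (lam d ℓ \ lam d (ℓ - r)) ∧ p.1 - p.2 ∈ Set.univ}, G (p.1 - p.2) := by
          refine lintegral_mono_set fun p hp => ?_
          have hp' : p.1 ∈ lam d ℓ ∧ p.2 ∈ lam d ℓ ∧ p.1 ∉ lam d (ℓ - r) ∧ ‖p.2 - p.1‖ ≤ r := hp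
          exact ⟨⟨hp'.1, hp'.2.2.1⟩, Set.mem_univ _⟩
        refine hstep.trans ?_
        rw [key_prod G hGmeas _ _ ((lam_measurableSet ℓ).diff (lam_measurableSet (ℓ - r)))
          MeasurableSet.univ, Measure.restrict_univ]
        have hvol : volume (lam d ℓ \ lam d (ℓ - r)) =
            ENNReal.ofReal ((2*ℓ)^d - (2*(ℓ-r))^d) := by
          rw [measure_diff (lam_mono (by linarith)) (lam_measurableSet (ℓ - r)).nullMeasurableSet
            (by rw [volume_lam (by linarith : (0:ℝ) ≤ ℓ - r)]; exact ofReal_ne_top),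
            volume_lam (by linarith : (0:ℝ) ≤ ℓ), volume_lam (by linarith : (0:ℝ) ≤ ℓ - r),
            ← ENNReal.ofReal_sub _ (pow_nonneg (by linarith : (0:ℝ) ≤ 2*(ℓ-r)) d)]
        rw [hvol]
      · -- Δ₃ part
        have hstep : ∫⁻ p in delta3 d ℓ r, G (p.1 - p.2) ≤
            ∫⁻ p in {p : EuclideanSpace ℝ (Fin d) × EuclideanSpace ℝ (Fin d) |
              p.1 ∈ lam d ℓ ∧ p.1 - p.2 ∈ {z : EuclideanSpace ℝ (Fin d) | r < ‖z‖}},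
              G (p.1 - p.2) := by
          refine lintegral_mono_set fun p hp => ?_
          have hp' : p.1 ∈ lam d ℓ ∧ p.2 ∈ lam d ℓ ∧ r < ‖p.1 - p.2‖ := hp
          exact ⟨hp'.1, hp'.2.2⟩
        refine hstep.trans ?_
        rw [key_prod G hGmeas _ _ (lam_measurableSet ℓ)
          (measurableSet_lt measurable_const measurable_norm),
          volume_lam (by linarith : (0:ℝ) ≤ ℓ)]
        exact mul_le_mul_right hTail _
    -- put everything together
    have hsubnn : 0 ≤ (2*ℓ)^d - (2*(ℓ-r))^d := by
      have : (2*(ℓ-r))^d ≤ (2*ℓ)^d := pow_le_pow_left₀ (by linarith) (by linarith) d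
      linarith
    have hBne : ENNReal.ofReal ((2*ℓ)^d - (2*(ℓ-r))^d) * (∫⁻ z, G z)
        + ENNReal.ofReal ((2*ℓ)^d) * ENNReal.ofReal (ε/2) ≠ ⊤ :=
      ENNReal.add_ne_top.2 ⟨ENNReal.mul_ne_top ofReal_ne_top hCtot.ne,
        ENNReal.mul_ne_top ofReal_ne_top ofReal_ne_top⟩
    have h4 : (∫⁻ p in delta2 d ℓ r ∪ delta3 d ℓ r, G (p.1 - p.2)).toReal ≤
        ((2*ℓ)^d - (2*(ℓ-r))^d) * Ct + (2*ℓ)^d * (ε/2) := by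
      refine le_trans (ENNReal.toReal_mono hBne hsplit) (le_of_eq ?_)
      rw [ENNReal.toReal_add (ENNReal.mul_ne_top ofReal_ne_top hCtot.ne)
        (ENNReal.mul_ne_top ofReal_ne_top ofReal_ne_top), ENNReal.toReal_mul,
        ENNReal.toReal_mul, ENNReal.toReal_ofReal hsubnn,
        ENNReal.toReal_ofReal (by positivity : (0:ℝ) ≤ (2*ℓ)^d),
        ENNReal.toReal_ofReal (half_pos hε).le, hCt]
    have halg : ((2*ℓ)^d)⁻¹ * (((2*ℓ)^d - (2*(ℓ-r))^d) * Ct + (2*ℓ)^d * (ε/2)) =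
        (1 - (1 - r/ℓ)^d) * Ct + ε/2 := by
      have hkey : (2*(ℓ-r))^d = (2*ℓ)^d * (1 - r/ℓ)^d := by
        rw [← mul_pow]
        congr 1
        field_simp
      rw [hkey]
      field_simp
    calc |((2 * ℓ) ^ d)⁻¹ * ∫ p in delta2 d ℓ r ∪ delta3 d ℓ r, u (p.1 - p.2) * ρ p|
        = ((2 * ℓ) ^ d)⁻¹ * |∫ p in delta2 d ℓ r ∪ delta3 d ℓ r, u (p.1 - p.2) * ρ p| := by
          rw [abs_mul, abs_of_nonneg (inv_nonneg.2 hP.le)]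
      _ ≤ ((2 * ℓ) ^ d)⁻¹ * (((2*ℓ)^d - (2*(ℓ-r))^d) * Ct + (2*ℓ)^d * (ε/2)) :=
          mul_le_mul_of_nonneg_left (hA1.trans h4) (inv_nonneg.2 hP.le)
      _ = (1 - (1 - r/ℓ)^d) * Ct + ε/2 := halg
      _ ≤ ε := by linarith
  refine limsup_le_of_le (isCoboundedUnder_le_of_le atTop fun ℓ => abs_nonneg _) hev
end
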